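/- In the polynomial ring ℚ[λ1, λ2, λ3, λ4, λ5, x], the identity (x(λ2 + λ5x)(λ4 + x)(λ3 + x + x²))² = 4·(x(λ2 + λ5x)(λ4 + x))³ + a1·(x(λ2 + λ5x)(λ4 + x))² + a2·(x(λ2 + λ5x)(λ4 + x)) holds, where a1 = λ3² + 2λ3·x(1 + x) + x(−4λ2(λ4 + x) + x(1 − 4λ1 − 4λ4λ5 + 2x − 4λ5x + x²)) and a2 = 4λ1·x³(λ4 + x)(λ2 + λ5x). (Equivalently, x ↦ (x, x(λ2 + λ5x)(λ4 + x), x(λ2 + λ5x)(λ4 + x)(λ3 + x + x²)) defines a section Q of the elliptic fibration z1² = 4y1³ + a1(x1)y1² + a2(x1)y1 attached to the K3 surface S_17.) -/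
import Mathlib


open MvPolynomial

theorem stmt_18 (l1 l2 l3 l4 l5 x : MvPolynomial (Fin 6) ℚ)
    (h1 : l1 = X 0) (h2 : l2 = X 1) (h3 : l3 = X 2) (h4 : l4 = X 3) (h5 : l5 = X 4)
    (hx : x = X 5) :
    (x * (l2 + l5 * x) * (l4 + x) * (l3 + x + x ^ 2)) ^ 2
      = 4 * (x * (l2 + l5 * x) * (l4 + x)) ^ 3
        + (l3 ^ 2 + 2 * l3 * x * (1 + x)
            + x * (-4 * l2 * (l4 + x)
              + x * (1 - 4 * l1 - 4 * l4 * l5 + 2 * x - 4 * l5 * x + x ^ 2)))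
            * (x * (l2 + l5 * x) * (l4 + x)) ^ 2
        + (4 * l1 * x ^ 3 * (l4 + x) * (l2 + l5 * x)) * (x * (l2 + l5 * x) * (l4 + x)) := by
  subst h1 h2 h3 h4 h5 hx; ring
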